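/- Let h ≤ H < Q be positive integers with Q ≪ x and H = o(x) as x → ∞, and let f, g' : ℕ → ℂ be essentially bounded. Then ∑_{1 ≤ a ≤ H} ∑_{H < q ≤ Q} g'(q) ∑_{x < n ≤ x+h, n ≡ a mod q} f(n) = ( ∑_{1 ≤ a ≤ H} ∑_{H < q ≤ Q, q | x−a} g'(q) ) · ∑_{x < n ≤ x+h} f(n) + O_ε(x^ε h²). -/

import Mathlib

open Finset Filter Asymptotics

/-- `f` is essentially bounded: for every `ε > 0`, `f n ≪_ε n^ε`. -/
def EssBdd (f : ℕ → ℂ) : Prop :=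
  ∀ ε : ℝ, 0 < ε → ∃ C : ℝ, ∀ n : ℕ, 1 ≤ n → ‖f n‖ ≤ C * (n : ℝ) ^ ε


lemma geom_lin (δ : ℝ) (hδ : 0 < δ) :
    ∃ C0 : ℝ, 1 ≤ C0 ∧ ∀ k : ℕ, (k + 1 : ℝ) ≤ C0 * (2:ℝ) ^ ((k:ℝ) * δ) := by
  set t : ℝ := (2:ℝ) ^ δ - 1 with ht
  have ht0 : 0 < t := by
    have : (1:ℝ) < (2:ℝ) ^ δ :=
      Real.one_lt_rpow_iff_of_pos (by norm_num) |>.mpr (Or.inl ⟨by norm_num, hδ⟩)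
    simp only [ht]; linarith
  refine ⟨max 1 (1/t), le_max_left _ _, fun k => ?_⟩
  have h2 : (2:ℝ) ^ ((k:ℝ) * δ) = (1 + t) ^ k := by
    rw [mul_comm, Real.rpow_mul (by norm_num), Real.rpow_natCast]
    norm_num [ht]
  have hBern : 1 + (k:ℝ) * t ≤ (1 + t) ^ k := one_add_mul_le_pow (by linarith) k
  set C0 : ℝ := max 1 (1/t) with hC0
  have hC1 : (1:ℝ) ≤ C0 := le_max_left _ _
  have h3 : 1 ≤ C0 * t := by
    have h4 : 1/t ≤ C0 := le_max_right _ _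
    calc (1:ℝ) = (1/t) * t := by field_simp
    _ ≤ C0 * t := by nlinarith
  have hk0 : (0:ℝ) ≤ (k:ℝ) := Nat.cast_nonneg k
  calc (k + 1 : ℝ) ≤ C0 * (1 + (k:ℝ) * t) := by nlinarith
  _ ≤ C0 * (1 + t) ^ k := by nlinarith
  _ = C0 * (2:ℝ) ^ ((k:ℝ) * δ) := by rw [h2]

lemma divisor_bound (δ : ℝ) (hδ : 0 < δ) :
    ∃ C : ℝ, 1 ≤ C ∧ ∀ n : ℕ, 1 ≤ n → ((n.divisors.card : ℝ)) ≤ C * (n:ℝ) ^ δ := by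
  classical
  obtain ⟨C0, hC01, hC0k⟩ := geom_lin δ hδ
  set N : ℕ := ⌈(2:ℝ) ^ (1/δ)⌉₊ with hN
  refine ⟨C0 ^ N, one_le_pow₀ hC01, fun n hn => ?_⟩
  have hn0 : n ≠ 0 := by omega
  rw [Nat.card_divisors hn0]
  push_cast
  set k : ℕ → ℕ := fun p => n.factorization p with hk
  have step1 : ∏ p ∈ n.primeFactors, ((k p : ℝ) + 1)
      ≤ ∏ p ∈ n.primeFactors,
          ((if (p:ℝ) ^ δ < 2 then C0 else 1) * (p:ℝ) ^ ((k p : ℝ) * δ)) := by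
    apply Finset.prod_le_prod
    · intro p _; positivity
    · intro p hp
      have hp2 : 2 ≤ p := (Nat.prime_of_mem_primeFactors hp).two_le
      have hp2R : (2:ℝ) ≤ (p:ℝ) := by exact_mod_cast hp2
      by_cases hps : (p:ℝ) ^ δ < 2
      · rw [if_pos hps]
        calc ((k p : ℝ) + 1) ≤ C0 * (2:ℝ) ^ ((k p : ℝ) * δ) := hC0k _
        _ ≤ C0 * (p:ℝ) ^ ((k p : ℝ) * δ) := by
            apply mul_le_mul_of_nonneg_left _ (by linarith)
            exact Real.rpow_le_rpow (by norm_num) hp2R (by positivity)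
      · rw [if_neg hps, one_mul]
        have h2p : (2:ℝ) ≤ (p:ℝ) ^ δ := not_lt.mp hps
        calc ((k p : ℝ) + 1) ≤ (2:ℝ) ^ (k p) := by
              exact_mod_cast Nat.succ_le_of_lt (Nat.lt_two_pow_self (n := k p))
        _ ≤ ((p:ℝ) ^ δ) ^ (k p) := by
              apply pow_le_pow_left₀ (by norm_num) h2p
        _ = (p:ℝ) ^ ((k p : ℝ) * δ) := by
              rw [← Real.rpow_natCast ((p:ℝ) ^ δ) (k p), ← Real.rpow_mul (by positivity), mul_comm]
  have step3 : ∏ p ∈ n.primeFactors, (p:ℝ) ^ ((k p : ℝ) * δ) = (n:ℝ) ^ δ := by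
    have e1 : ∀ p ∈ n.primeFactors, (p:ℝ) ^ ((k p : ℝ) * δ) = (((p ^ k p : ℕ) : ℝ)) ^ δ := by
      intro p _
      rw [Real.rpow_mul (by positivity), Real.rpow_natCast]
      push_cast; ring_nf
    rw [Finset.prod_congr rfl e1, Real.finset_prod_rpow _ _ (fun p _ => by positivity)]
    congr 1
    have h5 := Nat.factorization_prod_pow_eq_self hn0
    rw [show (n.factorization.prod fun p e => p ^ e) = ∏ p ∈ n.primeFactors, p ^ n.factorization p from by rw [← Nat.support_factorization]; rfl] at h5
    exact_mod_cast congrArg (Nat.cast : ℕ → ℝ) h5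
  have step4 : (∏ p ∈ n.primeFactors, (if (p:ℝ) ^ δ < 2 then C0 else 1)) ≤ C0 ^ N := by
    have e : ∏ p ∈ n.primeFactors, (if (p:ℝ) ^ δ < 2 then C0 else 1)
        = C0 ^ (n.primeFactors.filter (fun p : ℕ => (p:ℝ) ^ δ < 2)).card := by
      rw [← Finset.prod_const]
      exact (Finset.prod_filter (fun p : ℕ => (p:ℝ) ^ δ < 2) (fun _ => C0)).symm
    rw [e]
    apply pow_le_pow_right₀ hC01
    calc (n.primeFactors.filter (fun p : ℕ => (p:ℝ) ^ δ < 2)).card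
        ≤ (Finset.range N).card := by
          apply Finset.card_le_card
          intro p hp
          simp only [Finset.mem_filter] at hp
          obtain ⟨hpf, hps⟩ := hp
          have hp2 : (2:ℝ) ≤ (p:ℝ) := by
            exact_mod_cast (Nat.prime_of_mem_primeFactors hpf).two_le
          have hlt : (p:ℝ) < (2:ℝ) ^ (1/δ) := by
            have h6 := Real.rpow_lt_rpow (by positivity) hps (by positivity : 0 < 1/δ)
            rwa [← Real.rpow_mul (by linarith : (0:ℝ) ≤ (p:ℝ)), mul_one_div_cancel hδ.ne',
              Real.rpow_one] at h6
          exact Finset.mem_range.mpr (Nat.lt_ceil.mpr hlt)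
        _ = N := Finset.card_range _
  calc ∏ p ∈ n.primeFactors, ((k p : ℝ) + 1)
      ≤ ∏ p ∈ n.primeFactors,
          ((if (p:ℝ) ^ δ < 2 then C0 else 1) * (p:ℝ) ^ ((k p : ℝ) * δ)) := step1
  _ = (∏ p ∈ n.primeFactors, (if (p:ℝ) ^ δ < 2 then C0 else 1))
        * ∏ p ∈ n.primeFactors, (p:ℝ) ^ ((k p : ℝ) * δ) := Finset.prod_mul_distrib
  _ ≤ C0 ^ N * (n:ℝ) ^ δ := by
      rw [step3]
      apply mul_le_mul_of_nonneg_right step4 (by positivity)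


lemma mod_char (q X a : ℕ) (ha1 : 1 ≤ a) (haq : a < q) (haX : a < X) :
    q ∣ X - a ↔ X % q = a := by
  constructor
  · rintro ⟨t, ht⟩
    have hX : X = a + q * t := by omega
    rw [hX, Nat.add_mul_mod_self_left]
    exact Nat.mod_eq_of_lt haq
  · intro hb
    have := Nat.div_add_mod X q
    exact ⟨X / q, by omega⟩

lemma bad_q_divides (h H X q n : ℕ) (hh : 0 < h) (hhH : h ≤ H) (hHX : H < X)
    (hqH : H < q) (hn1 : X < n) (hn2 : n ≤ X + h)
    (hbad : ¬ ((n % q ∈ Finset.Icc 1 H) ↔ (X % q ∈ Finset.Icc 1 H))) :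
    ∃ m ∈ (Finset.Ioc (H - h) H).image (X - ·) ∪ (Finset.range h).image (X + ·), q ∣ m := by
  have hq0 : 0 < q := by omega
  set j := n - X with hj
  have hj1 : 1 ≤ j := by omega
  have hjh : j ≤ h := by omega
  set b := X % q with hb
  have hbq : b < q := Nat.mod_lt _ hq0
  have hdm : q * (X / q) + b = X := Nat.div_add_mod X q
  have hjq : j < q := by omega
  have hnmod : n % q = (b + j) % q := by
    conv_lhs => rw [show n = X + j from by omega]
    rw [Nat.add_mod, ← hb, Nat.mod_eq_of_lt hjq]
  simp only [Finset.mem_Icc] at hbad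
  rcases Nat.eq_zero_or_pos b with hb0 | hb1
  · refine ⟨X, ?_, ⟨X / q, by omega⟩⟩
    exact Finset.mem_union_right _
      (Finset.mem_image.mpr ⟨0, Finset.mem_range.mpr hh, by omega⟩)
  rcases le_or_gt b H with hbH | hbH
  · have hc : ¬ (1 ≤ n % q ∧ n % q ≤ H) := by omega
    have hbwin : H - h < b := by
      rcases lt_or_ge (b + j) q with hlt | hge
      · rw [hnmod, Nat.mod_eq_of_lt hlt] at hc
        omega
      · omega
    refine ⟨X - b, ?_, ⟨X / q, by omega⟩⟩
    exact Finset.mem_union_left _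
      (Finset.mem_image.mpr ⟨b, Finset.mem_Ioc.mpr ⟨hbwin, hbH⟩, rfl⟩)
  · have hc : 1 ≤ n % q ∧ n % q ≤ H := by omega
    have hge : q ≤ b + j := by
      by_contra hlt
      push_neg at hlt
      rw [hnmod, Nat.mod_eq_of_lt hlt] at hc
      omega
    have hval : n % q = b + j - q := by
      rw [hnmod, Nat.mod_eq_sub_mod hge, Nat.mod_eq_of_lt (by omega)]
    refine ⟨X + (q - b), ?_, ⟨X / q + 1, by rw [Nat.mul_add, Nat.mul_one]; omega⟩⟩
    refine Finset.mem_union_right _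
      (Finset.mem_image.mpr ⟨q - b, Finset.mem_range.mpr ?_, rfl⟩)
    omega

lemma main_fixed (h H Q X : ℕ) (hh : 0 < h) (hhH : h ≤ H) (hHQ : H < Q) (hHX : H < X)
    (f g' : ℕ → ℂ) (Bf Bg D : ℝ) (hBf0 : 0 ≤ Bf) (hBg0 : 0 ≤ Bg) (hD0 : 0 ≤ D)
    (hBf : ∀ n, X < n → n ≤ X + h → ‖f n‖ ≤ Bf)
    (hBg : ∀ q, H < q → q ≤ Q → ‖g' q‖ ≤ Bg)
    (hD : ∀ m : ℕ, 1 ≤ m → m ≤ X + h → ((m.divisors.card : ℝ)) ≤ D) :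
    ‖(∑ a ∈ Finset.Icc 1 H, ∑ q ∈ Finset.Ioc H Q,
        g' q * ∑ n ∈ (Finset.Ioc X (X + h)).filter (fun n => n % q = a % q), f n)
      - (∑ a ∈ Finset.Icc 1 H, ∑ q ∈ (Finset.Ioc H Q).filter (fun q => q ∣ X - a), g' q)
          * (∑ n ∈ Finset.Ioc X (X + h), f n)‖ ≤ Bg * Bf * (2 * h * h * D) := by
  classical
  set I := Finset.Ioc X (X + h) with hI
  -- Step 1: rewrite the first double sum
  have hS1 : (∑ a ∈ Finset.Icc 1 H, ∑ q ∈ Finset.Ioc H Q,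
        g' q * ∑ n ∈ I.filter (fun n => n % q = a % q), f n)
      = ∑ q ∈ Finset.Ioc H Q, g' q * ∑ n ∈ I, (if n % q ∈ Finset.Icc 1 H then f n else 0) := by
    rw [Finset.sum_comm]
    apply Finset.sum_congr rfl
    intro q hq
    rw [Finset.mem_Ioc] at hq
    rw [← Finset.mul_sum]
    congr 1
    have e1 : ∀ a ∈ Finset.Icc 1 H,
        (∑ n ∈ I.filter (fun n => n % q = a % q), f n)
        = ∑ n ∈ I.filter (fun n => n % q = a), f n := by
      intro a ha
      rw [Finset.mem_Icc] at ha
      have : I.filter (fun n => n % q = a % q) = I.filter (fun n => n % q = a) :=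
        Finset.filter_congr (fun n _ => by rw [Nat.mod_eq_of_lt (show a < q by omega)])
      rw [this]
    rw [Finset.sum_congr rfl e1,
      Finset.sum_fiberwise_eq_sum_filter I (Finset.Icc 1 H) (fun n => n % q) f,
      Finset.sum_filter]
  -- Step 2: rewrite the second double sum
  have hS2 : (∑ a ∈ Finset.Icc 1 H, ∑ q ∈ (Finset.Ioc H Q).filter (fun q => q ∣ X - a), g' q)
      = ∑ q ∈ Finset.Ioc H Q, (if X % q ∈ Finset.Icc 1 H then g' q else 0) := by
    have e2 : ∀ a ∈ Finset.Icc 1 H,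
        (∑ q ∈ (Finset.Ioc H Q).filter (fun q => q ∣ X - a), g' q)
        = ∑ q ∈ Finset.Ioc H Q, (if q ∣ X - a then g' q else 0) :=
      fun a _ => Finset.sum_filter _ _
    rw [Finset.sum_congr rfl e2, Finset.sum_comm]
    apply Finset.sum_congr rfl
    intro q hq
    rw [Finset.mem_Ioc] at hq
    by_cases hXq : X % q ∈ Finset.Icc 1 H
    · rw [if_pos hXq]
      rw [Finset.mem_Icc] at hXq
      rw [Finset.sum_eq_single_of_mem (X % q) (Finset.mem_Icc.mpr hXq)]
      · rw [if_pos ((mod_char q X (X % q) hXq.1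
          (Nat.mod_lt _ (by omega)) (by omega)).mpr rfl)]
      · intro a ha hane
        rw [Finset.mem_Icc] at ha
        rw [if_neg]
        intro hdvd
        exact hane ((mod_char q X a ha.1 (by omega) (by omega)).mp hdvd).symm
    · rw [if_neg hXq]
      apply Finset.sum_eq_zero
      intro a ha
      rw [Finset.mem_Icc] at ha
      rw [if_neg]
      intro hdvd
      have := (mod_char q X a ha.1 (by omega) (by omega)).mp hdvd
      exact hXq (Finset.mem_Icc.mpr (by omega))
  rw [hS1, hS2, Finset.sum_mul, ← Finset.sum_sub_distrib]
  -- rewrite each q-term as a sum over n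
  have e3 : ∀ q ∈ Finset.Ioc H Q,
      (g' q * ∑ n ∈ I, (if n % q ∈ Finset.Icc 1 H then f n else 0)
        - (if X % q ∈ Finset.Icc 1 H then g' q else 0) * ∑ n ∈ I, f n)
      = ∑ n ∈ I, g' q * ((if n % q ∈ Finset.Icc 1 H then f n else 0)
          - (if X % q ∈ Finset.Icc 1 H then f n else 0)) := by
    intro q _
    by_cases hc : X % q ∈ Finset.Icc 1 H
    · simp only [if_pos hc, Finset.mul_sum, Finset.sum_sub_distrib, mul_sub]
    · simp only [if_neg hc, Finset.mul_sum, Finset.sum_sub_distrib, mul_sub, zero_mul,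
        sub_zero, mul_zero]
      simp
  rw [Finset.sum_congr rfl e3]
  -- now bound
  calc ‖∑ q ∈ Finset.Ioc H Q, ∑ n ∈ I, g' q * ((if n % q ∈ Finset.Icc 1 H then f n else 0)
          - (if X % q ∈ Finset.Icc 1 H then f n else 0))‖
      ≤ ∑ q ∈ Finset.Ioc H Q, ∑ n ∈ I, ‖g' q * ((if n % q ∈ Finset.Icc 1 H then f n else 0)
          - (if X % q ∈ Finset.Icc 1 H then f n else 0))‖ :=
        (norm_sum_le _ _).trans (Finset.sum_le_sum fun q _ => norm_sum_le _ _)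
    _ ≤ ∑ q ∈ Finset.Ioc H Q, ∑ n ∈ I,
        (if ¬ ((n % q ∈ Finset.Icc 1 H) ↔ (X % q ∈ Finset.Icc 1 H)) then Bg * Bf else 0) := by
        apply Finset.sum_le_sum
        intro q hq
        apply Finset.sum_le_sum
        intro n hn
        rw [Finset.mem_Ioc] at hq hn
        by_cases hbad : (n % q ∈ Finset.Icc 1 H) ↔ (X % q ∈ Finset.Icc 1 H)
        · rw [if_neg (not_not.mpr hbad)]
          by_cases h1 : n % q ∈ Finset.Icc 1 H
          · rw [if_pos h1, if_pos (hbad.mp h1), sub_self, mul_zero, norm_zero]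
          · rw [if_neg h1, if_neg (fun h2 => h1 (hbad.mpr h2)), sub_self, mul_zero, norm_zero]
        · rw [if_pos hbad, norm_mul]
          have hg : ‖g' q‖ ≤ Bg := hBg q hq.1 hq.2
          have hfn : ‖f n‖ ≤ Bf := hBf n hn.1 hn.2
          have hnorm : ‖(if n % q ∈ Finset.Icc 1 H then f n else 0)
              - (if X % q ∈ Finset.Icc 1 H then f n else 0)‖ ≤ Bf := by
            by_cases h1 : n % q ∈ Finset.Icc 1 H <;>
              by_cases h2 : X % q ∈ Finset.Icc 1 H <;>
              simp [h1, h2, hfn, norm_neg] <;> tauto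
          exact mul_le_mul hg hnorm (norm_nonneg _) hBg0
    _ = ∑ n ∈ I, ∑ q ∈ Finset.Ioc H Q,
        (if ¬ ((n % q ∈ Finset.Icc 1 H) ↔ (X % q ∈ Finset.Icc 1 H)) then Bg * Bf else 0) :=
        Finset.sum_comm
    _ ≤ ∑ n ∈ I, (Bg * Bf) * (2 * h * D) := by
        apply Finset.sum_le_sum
        intro n hn
        rw [hI, Finset.mem_Ioc] at hn
        set M := (Finset.Ioc (H - h) H).image (X - ·) ∪ (Finset.range h).image (X + ·) with hM
        have hsub : (Finset.Ioc H Q).filter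
            (fun q => ¬ ((n % q ∈ Finset.Icc 1 H) ↔ (X % q ∈ Finset.Icc 1 H)))
            ⊆ M.biUnion (fun m => m.divisors) := by
          intro q hq
          rw [Finset.mem_filter, Finset.mem_Ioc] at hq
          obtain ⟨⟨hq1, hq2⟩, hbad⟩ := hq
          obtain ⟨m, hm, hdvd⟩ := bad_q_divides h H X q n hh hhH hHX hq1 hn.1 hn.2 hbad
          have hm0 : m ≠ 0 := by
            rw [Finset.mem_union] at hm
            rcases hm with hm | hm <;>
            · obtain ⟨b, hb, rfl⟩ := Finset.mem_image.mp hm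
              first
                | (rw [Finset.mem_Ioc] at hb; omega)
                | omega
          exact Finset.mem_biUnion.mpr ⟨m, hm, Nat.mem_divisors.mpr ⟨hdvd, hm0⟩⟩
        have hcard : (((Finset.Ioc H Q).filter
            (fun q => ¬ ((n % q ∈ Finset.Icc 1 H) ↔ (X % q ∈ Finset.Icc 1 H)))).card : ℝ)
            ≤ 2 * h * D := by
          calc (((Finset.Ioc H Q).filter _).card : ℝ)
              ≤ ((M.biUnion (fun m => m.divisors)).card : ℝ) := by
                exact_mod_cast Finset.card_le_card hsub
            _ ≤ ((∑ m ∈ M, m.divisors.card : ℕ) : ℝ) := by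
                exact_mod_cast Finset.card_biUnion_le
            _ = ∑ m ∈ M, ((m.divisors.card : ℕ) : ℝ) := by push_cast; rfl
            _ ≤ ∑ m ∈ M, D := by
                apply Finset.sum_le_sum
                intro m hm
                rw [Finset.mem_union] at hm
                have hm1 : 1 ≤ m ∧ m ≤ X + h := by
                  rcases hm with hm | hm <;>
                  · obtain ⟨b, hb, rfl⟩ := Finset.mem_image.mp hm
                    first
                      | (rw [Finset.mem_Ioc] at hb; omega)
                      | (rw [Finset.mem_range] at hb; omega)
                exact hD m hm1.1 hm1.2
            _ = (M.card : ℝ) * D := by rw [Finset.sum_const, nsmul_eq_mul]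
            _ ≤ 2 * h * D := by
                apply mul_le_mul_of_nonneg_right _ hD0
                have : M.card ≤ 2 * h := by
                  calc M.card ≤ ((Finset.Ioc (H - h) H).image (X - ·)).card
                        + ((Finset.range h).image (X + ·)).card := Finset.card_union_le _ _
                    _ ≤ (Finset.Ioc (H - h) H).card + (Finset.range h).card := by
                        exact Nat.add_le_add Finset.card_image_le Finset.card_image_le
                    _ ≤ 2 * h := by
                        rw [Nat.card_Ioc, Finset.card_range]; omega
                exact_mod_cast this
        calc (∑ q ∈ Finset.Ioc H Q,
            (if ¬ ((n % q ∈ Finset.Icc 1 H) ↔ (X % q ∈ Finset.Icc 1 H)) then Bg * Bf else 0))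
            = (((Finset.Ioc H Q).filter
              (fun q => ¬ ((n % q ∈ Finset.Icc 1 H) ↔ (X % q ∈ Finset.Icc 1 H)))).card : ℝ)
              * (Bg * Bf) := by
              rw [← Finset.sum_filter, Finset.sum_const, nsmul_eq_mul]
          _ ≤ (2 * h * D) * (Bg * Bf) := by
              apply mul_le_mul_of_nonneg_right hcard (by positivity)
          _ = (Bg * Bf) * (2 * h * D) := by ring
    _ = (I.card : ℝ) * ((Bg * Bf) * (2 * h * D)) := by rw [Finset.sum_const, nsmul_eq_mul]
    _ ≤ Bg * Bf * (2 * h * h * D) := by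
        rw [hI, Nat.card_Ioc, show X + h - X = h from by omega]
        exact le_of_eq (by ring)

/-- Reformulation (Remark 4) of the second formula of the Pinch Lemma:
the congruence `n ≡ a (mod q)` is pinched to `q ∣ x - a`. -/
theorem pinch_lemma_second_divisor_form
    (h H Q x : ℕ → ℕ) (hh : ∀ i, 0 < h i) (hx : ∀ i, 0 < x i)
    (hhH : ∀ i, h i ≤ H i) (hHQ : ∀ i, H i < Q i)
    (hQx : (fun i => (Q i : ℝ)) =O[atTop] (fun i => (x i : ℝ)))
    (hHx : (fun i => (H i : ℝ)) =o[atTop] (fun i => (x i : ℝ)))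
    (f g' : ℕ → ℂ) (hf : EssBdd f) (hg' : EssBdd g')
    (ε : ℝ) (hε : 0 < ε) :
    (fun i =>
        (∑ a ∈ Finset.Icc 1 (H i), ∑ q ∈ Finset.Ioc (H i) (Q i),
            g' q * ∑ n ∈ (Finset.Ioc (x i) (x i + h i)).filter (fun n => n % q = a % q), f n)
          - (∑ a ∈ Finset.Icc 1 (H i),
                ∑ q ∈ (Finset.Ioc (H i) (Q i)).filter (fun q => q ∣ x i - a), g' q) *
              (∑ n ∈ Finset.Ioc (x i) (x i + h i), f n))
      =O[atTop] (fun i => (x i : ℝ) ^ ε * (h i : ℝ) ^ 2) := by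
  set δ : ℝ := ε / 3 with hδdef
  have hδ : 0 < δ := by positivity
  obtain ⟨Cf0, hCf0⟩ := hf δ hδ
  obtain ⟨Cg0, hCg0⟩ := hg' δ hδ
  set Cf : ℝ := max Cf0 1 with hCfdef
  set Cg : ℝ := max Cg0 1 with hCgdef
  have hCf1 : (1:ℝ) ≤ Cf := le_max_right _ _
  have hCg1 : (1:ℝ) ≤ Cg := le_max_right _ _
  have hCf : ∀ n : ℕ, 1 ≤ n → ‖f n‖ ≤ Cf * (n : ℝ) ^ δ := fun n hn =>
    (hCf0 n hn).trans (mul_le_mul_of_nonneg_right (le_max_left _ _) (by positivity))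
  have hCg : ∀ n : ℕ, 1 ≤ n → ‖g' n‖ ≤ Cg * (n : ℝ) ^ δ := fun n hn =>
    (hCg0 n hn).trans (mul_le_mul_of_nonneg_right (le_max_left _ _) (by positivity))
  obtain ⟨Cd, hCd1, hCd⟩ := divisor_bound δ hδ
  obtain ⟨K0, hK0⟩ := hQx.bound
  set K : ℝ := max K0 1 with hKdef
  have hK1 : (1:ℝ) ≤ K := le_max_right _ _
  rw [Asymptotics.isBigO_iff]
  refine ⟨2 * Cg * Cf * Cd * (4 * K) ^ δ, ?_⟩
  have hhalf := hHx.def (by norm_num : (0:ℝ) < 1/2)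
  filter_upwards [hK0, hhalf] with i hKi hHi
  -- basic facts
  have hx1 : (1:ℝ) ≤ (x i : ℝ) := by exact_mod_cast hx i
  have hQi : (Q i : ℝ) ≤ K * (x i : ℝ) := by
    have h1 : ‖(Q i : ℝ)‖ = (Q i : ℝ) := by
      rw [Real.norm_eq_abs, abs_of_nonneg (Nat.cast_nonneg _)]
    have h2 : ‖(x i : ℝ)‖ = (x i : ℝ) := by
      rw [Real.norm_eq_abs, abs_of_nonneg (Nat.cast_nonneg _)]
    rw [h1, h2] at hKi
    calc (Q i : ℝ) ≤ K0 * (x i : ℝ) := hKi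
    _ ≤ K * (x i : ℝ) := by
        apply mul_le_mul_of_nonneg_right (le_max_left _ _) (by linarith)
  have hHxi : H i < x i := by
    have h2 : ‖(H i : ℝ)‖ = (H i : ℝ) := by
      rw [Real.norm_eq_abs, abs_of_nonneg (Nat.cast_nonneg _)]
    have h3 : ‖(x i : ℝ)‖ = (x i : ℝ) := by
      rw [Real.norm_eq_abs, abs_of_nonneg (Nat.cast_nonneg _)]
    rw [h2, h3] at hHi
    have : (H i : ℝ) < (x i : ℝ) := by linarith
    exact_mod_cast this
  -- bounds
  set X := x i with hX
  have hbound := main_fixed (h i) (H i) (Q i) X (hh i) (hhH i) (hHQ i) hHxi f g'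
    (Cf * ((2 * X : ℕ) : ℝ) ^ δ) (Cg * (K * (X : ℝ)) ^ δ) (Cd * ((2 * X : ℕ) : ℝ) ^ δ)
    (by positivity) (by positivity) (by positivity)
    (fun n hn1 hn2 => by
      have hn1' : 1 ≤ n := by omega
      have hle : (n : ℝ) ≤ ((2 * X : ℕ) : ℝ) := by
        have : n ≤ 2 * X := by
          have := hhH i; have := hHxi; omega
        exact_mod_cast this
      calc ‖f n‖ ≤ Cf * (n : ℝ) ^ δ := hCf n hn1'
      _ ≤ Cf * ((2 * X : ℕ) : ℝ) ^ δ := by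
          apply mul_le_mul_of_nonneg_left _ (by linarith)
          exact Real.rpow_le_rpow (Nat.cast_nonneg _) hle hδ.le)
    (fun q hq1 hq2 => by
      have hq1' : 1 ≤ q := by
        have := hhH i; have := hh i; omega
      calc ‖g' q‖ ≤ Cg * (q : ℝ) ^ δ := hCg q hq1'
      _ ≤ Cg * (K * (X : ℝ)) ^ δ := by
          apply mul_le_mul_of_nonneg_left _ (by linarith)
          apply Real.rpow_le_rpow (Nat.cast_nonneg _) _ hδ.le
          calc (q : ℝ) ≤ (Q i : ℝ) := by exact_mod_cast hq2
          _ ≤ K * (X : ℝ) := hQi)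
    (fun m hm1 hm2 => by
      have hle : (m : ℝ) ≤ ((2 * X : ℕ) : ℝ) := by
        have : m ≤ 2 * X := by
          have := hhH i; have := hHxi; omega
        exact_mod_cast this
      calc ((m.divisors.card : ℕ) : ℝ) ≤ Cd * (m : ℝ) ^ δ := hCd m hm1
      _ ≤ Cd * ((2 * X : ℕ) : ℝ) ^ δ := by
          apply mul_le_mul_of_nonneg_left _ (by linarith)
          exact Real.rpow_le_rpow (Nat.cast_nonneg _) hle hδ.le)
  refine hbound.trans ?_
  have h2X : ((2 * X : ℕ) : ℝ) = 2 * (X : ℝ) := by push_cast; ring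
  rw [h2X]
  have e1 : (K * (X:ℝ)) ^ δ * ((2 * (X:ℝ)) ^ δ * (2 * (X:ℝ)) ^ δ)
      = ((4 * K) * (X:ℝ) ^ (3:ℕ)) ^ δ := by
    rw [← Real.mul_rpow (by positivity) (by positivity),
      ← Real.mul_rpow (by positivity) (by positivity)]
    congr 1
    ring
  have e2 : ((4 * K) * (X:ℝ) ^ (3:ℕ)) ^ δ = (4 * K) ^ δ * (X:ℝ) ^ ε := by
    rw [Real.mul_rpow (by positivity) (by positivity), ← Real.rpow_natCast ((X:ℝ)) 3,
      ← Real.rpow_mul (by positivity)]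
    congr 1
    rw [hδdef]
    push_cast
    ring
  have hnorm : ‖(X : ℝ) ^ ε * ((h i : ℝ)) ^ 2‖ = (X : ℝ) ^ ε * ((h i : ℝ)) ^ 2 := by
    rw [Real.norm_eq_abs, abs_of_nonneg (by positivity)]
  rw [hnorm]
  calc Cg * (K * (X:ℝ)) ^ δ * (Cf * (2 * (X:ℝ)) ^ δ)
        * (2 * (h i : ℝ) * (h i : ℝ) * (Cd * (2 * (X:ℝ)) ^ δ))
      = (2 * Cg * Cf * Cd) * ((h i : ℝ) * (h i : ℝ))
        * ((K * (X:ℝ)) ^ δ * ((2 * (X:ℝ)) ^ δ * (2 * (X:ℝ)) ^ δ)) := by ring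
  _ = (2 * Cg * Cf * Cd) * ((h i : ℝ) * (h i : ℝ)) * ((4 * K) ^ δ * (X:ℝ) ^ ε) := by
      rw [e1, e2]
  _ = 2 * Cg * Cf * Cd * (4 * K) ^ δ * ((X : ℝ) ^ ε * ((h i : ℝ)) ^ 2) := by ring
  _ ≤ 2 * Cg * Cf * Cd * (4 * K) ^ δ * ((X : ℝ) ^ ε * ((h i : ℝ)) ^ 2) := le_rfl
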